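/- Proposition 3 (merging preserves the SBP property): if Q^L and Q^R are (p+1)×(p+1) real matrices each satisfying the local SBP property Q^L + (Q^L)ᵀ = B⁽ᵖ⁾ and Q^R + (Q^R)ᵀ = B⁽ᵖ⁾, then the merged (2p+1)×(2p+1) matrix Q = Q^L ⊕ₘ Q^R satisfies the global SBP property Q + Qᵀ = B⁽²ᵖ⁾ (the +1 and −1 contributions at the shared interface node p cancel). -/

import Mathlib

open Matrix

/-- The boundary matrix `B⁽ⁿ⁾`: `(0,0)` entry `−1`, `(n,n)` entry `1`, all other entries `0`. -/
def Bmat (n : ℕ) : Matrix (Fin (n+1)) (Fin (n+1)) ℝ :=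
  Matrix.of fun i j =>
    if i = j ∧ i = Fin.last n then 1 else if i = j ∧ i = 0 then -1 else 0

/-- The merged `(2p+1)×(2p+1)` matrix `A = Aᴸ ⊕ₘ Aᴿ` built from two `(p+1)×(p+1)` element
matrices sharing the interface node `p`. -/
def merge {p : ℕ} (AL AR : Matrix (Fin (p+1)) (Fin (p+1)) ℝ) :
    Matrix (Fin (2*p+1)) (Fin (2*p+1)) ℝ :=
  Matrix.of fun i j =>
    (if h : (i : ℕ) ≤ p ∧ (j : ℕ) ≤ p then
        AL ⟨i, by omega⟩ ⟨j, by omega⟩ else 0)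
    + (if h : p ≤ (i : ℕ) ∧ p ≤ (j : ℕ) then
        AR ⟨(i : ℕ) - p, by have := i.isLt; omega⟩ ⟨(j : ℕ) - p, by have := j.isLt; omega⟩
      else 0)

lemma Bmat_apply (n : ℕ) (i j : Fin (n+1)) :
    Bmat n i j = if (i : ℕ) = j ∧ (i : ℕ) = n then 1
      else if (i : ℕ) = j ∧ (i : ℕ) = 0 then -1 else 0 := by
  simp [Bmat, Fin.ext_iff, Fin.last, -Fin.val_eq_zero_iff]

set_option maxHeartbeats 1000000 in
/-- **Proposition 3.** Merging preserves the SBP property: if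
`Qᴸ + Qᴸᵀ = B⁽ᵖ⁾` and `Qᴿ + Qᴿᵀ = B⁽ᵖ⁾`, then the merged matrix `Q = Qᴸ ⊕ₘ Qᴿ`
satisfies `Q + Qᵀ = B⁽²ᵖ⁾`. -/
theorem stmt8 (p : ℕ) (hp : 1 ≤ p) (QL QR : Matrix (Fin (p+1)) (Fin (p+1)) ℝ)
    (hQL : QL + QLᵀ = Bmat p) (hQR : QR + QRᵀ = Bmat p) :
    merge QL QR + (merge QL QR)ᵀ = Bmat (2*p) := by
  have hL : ∀ i j : Fin (p+1), QL i j + QL j i = Bmat p i j := fun i j => by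
    have := congrFun (congrFun hQL i) j
    simpa [Matrix.add_apply, Matrix.transpose_apply] using this
  have hR : ∀ i j : Fin (p+1), QR i j + QR j i = Bmat p i j := fun i j => by
    have := congrFun (congrFun hQR i) j
    simpa [Matrix.add_apply, Matrix.transpose_apply] using this
  ext i j
  simp only [Matrix.add_apply, Matrix.transpose_apply, merge, Matrix.of_apply]
  rw [Bmat_apply]
  rcases lt_trichotomy (i : ℕ) p with hi | hi | hi <;>
    rcases lt_trichotomy (j : ℕ) p with hj | hj | hj
  · -- i<p, j<p
    have h1 := hL ⟨i, by omega⟩ ⟨j, by omega⟩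
    rw [Bmat_apply] at h1
    rw [dif_pos ⟨by omega, by omega⟩, dif_neg (by omega),
      dif_pos ⟨by omega, by omega⟩, dif_neg (by omega)]
    simp only at h1 ⊢
    split_ifs at h1 ⊢ <;> first | linarith | omega
  · -- i<p, j=p
    have h1 := hL ⟨i, by omega⟩ ⟨j, by omega⟩
    rw [Bmat_apply] at h1
    rw [dif_pos ⟨by omega, by omega⟩, dif_neg (by omega),
      dif_pos ⟨by omega, by omega⟩, dif_neg (by omega)]
    simp only at h1 ⊢
    split_ifs at h1 ⊢ <;> first | linarith | omega
  · -- i<p, j>p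
    rw [dif_neg (by omega), dif_neg (by omega), dif_neg (by omega), dif_neg (by omega)]
    split_ifs <;> first | omega | norm_num
  · -- i=p, j<p
    have h1 := hL ⟨i, by omega⟩ ⟨j, by omega⟩
    rw [Bmat_apply] at h1
    rw [dif_pos ⟨by omega, by omega⟩, dif_neg (by omega),
      dif_pos ⟨by omega, by omega⟩, dif_neg (by omega)]
    simp only at h1 ⊢
    split_ifs at h1 ⊢ <;> first | linarith | omega
  · -- i=p, j=p
    have h1 := hL ⟨i, by omega⟩ ⟨j, by omega⟩
    have h2 := hR ⟨(i:ℕ) - p, by omega⟩ ⟨(j:ℕ) - p, by omega⟩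
    rw [Bmat_apply] at h1 h2
    rw [dif_pos ⟨by omega, by omega⟩, dif_pos ⟨by omega, by omega⟩,
      dif_pos ⟨by omega, by omega⟩, dif_pos ⟨by omega, by omega⟩]
    simp only at h1 h2 ⊢
    split_ifs at h1 h2 ⊢ <;> first | linarith | omega
  · -- i=p, j>p
    have h2 := hR ⟨(i:ℕ) - p, by omega⟩ ⟨(j:ℕ) - p, by omega⟩
    rw [Bmat_apply] at h2
    rw [dif_neg (by omega), dif_pos ⟨by omega, by omega⟩,
      dif_neg (by omega), dif_pos ⟨by omega, by omega⟩]
    simp only at h2 ⊢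
    split_ifs at h2 ⊢ <;> first | linarith | omega
  · -- i>p, j<p
    rw [dif_neg (by omega), dif_neg (by omega), dif_neg (by omega), dif_neg (by omega)]
    split_ifs <;> first | omega | norm_num
  · -- i>p, j=p
    have h2 := hR ⟨(i:ℕ) - p, by omega⟩ ⟨(j:ℕ) - p, by omega⟩
    rw [Bmat_apply] at h2
    rw [dif_neg (by omega), dif_pos ⟨by omega, by omega⟩,
      dif_neg (by omega), dif_pos ⟨by omega, by omega⟩]
    simp only at h2 ⊢
    split_ifs at h2 ⊢ <;> first | linarith | omega
  · -- i>p, j>p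
    have h2 := hR ⟨(i:ℕ) - p, by omega⟩ ⟨(j:ℕ) - p, by omega⟩
    rw [Bmat_apply] at h2
    rw [dif_neg (by omega), dif_pos ⟨by omega, by omega⟩,
      dif_neg (by omega), dif_pos ⟨by omega, by omega⟩]
    simp only at h2 ⊢
    split_ifs at h2 ⊢ <;> first | linarith | omega
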